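/- For nonnegative integers k, p with d = k+p and n ≥ d, the number of Dyck paths of semilength n that start with at least k upsteps, end with at least p downsteps, and touch the x-axis between the endpoints equals the number of Standard Young Tableaux of shape (n, n-d). -/

import Mathlib

/-- Number of upsteps among the first `t` steps of the path `f`. -/
def upCount {m : ℕ} (f : Fin m → Bool) (t : ℕ) : ℕ :=
  (Finset.univ.filter (fun i : Fin m => (i : ℕ) < t ∧ f i = true)).card

/-- Number of downsteps among the first `t` steps of the path `f`. -/
def downCount {m : ℕ} (f : Fin m → Bool) (t : ℕ) : ℕ :=
  (Finset.univ.filter (fun i : Fin m => (i : ℕ) < t ∧ f i = false)).card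

/-- `f` encodes a Dyck path: never below the x-axis, ends on the x-axis. -/
def IsDyckPath {m : ℕ} (f : Fin m → Bool) : Prop :=
  (∀ t ≤ m, downCount f t ≤ upCount f t) ∧ upCount f m = downCount f m
/-- A two-row Standard Young Tableau of shape `(n, n-d)`, given by its rows
`top : Fin n → Fin (2*n-d)` and `bot : Fin (n-d) → Fin (2*n-d)` (entries are
`0`-indexed): rows strictly increase, columns strictly increase, and the two
rows partition all the entries. -/
def IsSYT (n d : ℕ) (top : Fin n → Fin (2*n - d)) (bot : Fin (n - d) → Fin (2*n - d)) : Prop :=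
  StrictMono top ∧ StrictMono bot ∧
  (∀ j : Fin (n - d), top (Fin.castLE (Nat.sub_le n d) j) < bot j) ∧
  (∀ i j, top i ≠ bot j) ∧
  (∀ v : Fin (2*n - d), (∃ i, top i = v) ∨ (∃ j, bot j = v))

open List

namespace DS

def bal (l : List Bool) : ℤ := (l.count true : ℤ) - (l.count false : ℤ)

def pre (l : List Bool) (t : ℕ) : ℤ := bal (l.take t)

@[simp] lemma bal_nil : bal [] = 0 := rfl

@[simp] lemma bal_append (x y : List Bool) : bal (x ++ y) = bal x + bal y := by
  simp [bal, count_append]; ring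

@[simp] lemma bal_cons (b : Bool) (l : List Bool) :
    bal (b :: l) = (if b then 1 else -1) + bal l := by
  cases b <;> simp [bal, count_cons] <;> ring

@[simp] lemma bal_singleton (b : Bool) : bal [b] = if b then 1 else -1 := by
  simpa using bal_cons b []

@[simp] lemma bal_replicate (m : ℕ) (b : Bool) :
    bal (replicate m b) = (if b then 1 else -1) * m := by
  cases b <;> simp [bal, count_replicate]

lemma bal_map_not (l : List Bool) : bal (l.map not) = -bal l := by
  induction l with
  | nil => simp
  | cons b l ih => cases b <;> simp [ih] <;> ring

@[simp] lemma bal_reverse (l : List Bool) : bal l.reverse = bal l := by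
  simp [bal]

lemma count_true_add_count_false (l : List Bool) :
    l.count true + l.count false = l.length := by
  induction l with
  | nil => simp
  | cons b l ih => cases b <;> simp [count_cons] <;> omega

@[simp] lemma pre_zero (l : List Bool) : pre l 0 = 0 := rfl

lemma pre_append (x y : List Bool) (t : ℕ) :
    pre (x ++ y) t = pre x t + pre y (t - x.length) := by
  simp [pre, take_append]

lemma pre_of_length_le (l : List Bool) {t : ℕ} (h : l.length ≤ t) : pre l t = bal l := by
  simp [pre, take_of_length_le h]

lemma pre_length (l : List Bool) : pre l l.length = bal l :=
  pre_of_length_le l le_rfl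

lemma pre_replicate (m : ℕ) (b : Bool) (t : ℕ) :
    pre (replicate m b) t = (if b then 1 else -1) * min t m := by
  simp [pre, take_replicate]

lemma pre_singleton (b : Bool) (t : ℕ) :
    pre [b] t = if t = 0 then 0 else (if b then 1 else -1) := by
  rcases t with _|t
  · simp
  · have : (1:ℕ) ≤ t+1 := by omega
    rw [pre_of_length_le] <;> simp

lemma pre_succ (l : List Bool) (t : ℕ) (h : t < l.length) :
    pre l (t+1) = pre l t + (if l.get ⟨t, h⟩ then 1 else -1) := by
  have : l.take (t+1) = l.take t ++ [l.get ⟨t, h⟩] := by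
    rw [take_succ]
    simp [getElem?_eq_getElem h]
  rw [pre, this, bal_append, bal_singleton]
  rfl

lemma pre_take (l : List Bool) (m t : ℕ) : pre (l.take m) t = pre l (min t m) := by
  simp [pre, take_take]

lemma bal_drop (l : List Bool) (m : ℕ) : bal (l.drop m) = bal l - pre l m := by
  have h := bal_append (l.take m) (l.drop m)
  rw [take_append_drop] at h
  unfold pre
  omega

lemma pre_revflip (a : List Bool) (t : ℕ) :
    pre (a.reverse.map not) t = pre a (a.length - t) - bal a := by
  rw [pre, ← map_take, take_reverse, bal_map_not, bal_reverse]
  rw [bal_drop]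
  ring

lemma pre_step_abs (l : List Bool) (t : ℕ) : |pre l (t+1) - pre l t| ≤ 1 := by
  rcases lt_or_ge t l.length with h | h
  · rw [pre_succ l t h]
    split <;> simp
  · rw [pre_of_length_le l h, pre_of_length_le l (by omega)]
    simp

/-- Discrete intermediate value theorem for walks with steps of size ≤ 1. -/
lemma ivt (g : ℕ → ℤ) (hg : ∀ t, |g (t+1) - g t| ≤ 1) (c : ℤ) :
    ∀ b a, a ≤ b → g a ≤ c → c ≤ g b → ∃ t, a ≤ t ∧ t ≤ b ∧ g t = c := by
  intro b
  induction b with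
  | zero =>
    intro a ha h1 h2
    have : a = 0 := by omega
    subst this
    exact ⟨0, le_rfl, le_rfl, by omega⟩
  | succ b ih =>
    intro a ha h1 h2
    rcases Nat.lt_or_ge a (b+1) with h | h
    · rcases le_or_gt c (g b) with hc | hc
      · obtain ⟨t, ht1, ht2, ht3⟩ := ih a (by omega) h1 hc
        exact ⟨t, ht1, by omega, ht3⟩
      · obtain ⟨h3, h4⟩ := abs_le.mp (hg b)
        refine ⟨b+1, by omega, le_rfl, by omega⟩
    · have : a = b + 1 := by omega
      subst this
      exact ⟨b+1, le_rfl, le_rfl, by omega⟩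

end DS

namespace DS
open List

def L1 (n k p : ℕ) : Set (List Bool) :=
  {w | w.length = 2*n ∧ (∀ t, 0 ≤ pre w t) ∧ bal w = 0 ∧
       w.take k = replicate k true ∧ w.drop (2*n - p) = replicate p false ∧
       ∃ t, 0 < t ∧ t < 2*n ∧ pre w t = 0}

def L2 (n d : ℕ) : Set (List Bool) :=
  {v | v.length = 2*n - d ∧ (∀ t, 0 ≤ pre v t) ∧ bal v = (d : ℤ)}

def P (n k p : ℕ) (a b : List Bool) : Prop :=
  a.length + b.length + (k + p) + 1 = 2*n ∧
  (∀ t, 1 ≤ (k:ℤ) + pre a t) ∧ (k:ℤ) + bal a = 1 ∧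
  (∀ t, 0 ≤ pre b t) ∧ bal b = (p:ℤ)

def W (k p : ℕ) (a b : List Bool) : List Bool :=
  replicate k true ++ a ++ [false] ++ b ++ replicate p false

def V (a b : List Bool) : List Bool := b ++ [true] ++ (a.reverse.map not)

lemma preW (k p : ℕ) (a b : List Bool) (t : ℕ) :
    pre (W k p a b) t = min (t:ℤ) k + pre a (t - k)
      + (if t - k - a.length = 0 then 0 else -1)
      + pre b (t - k - a.length - 1)
      - min ((t - k - a.length - 1 - b.length : ℕ) : ℤ) p := by
  rw [W, pre_append, pre_append, pre_append, pre_append, pre_replicate, pre_replicate,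
    pre_singleton]
  simp only [length_replicate, length_cons, length_nil, length_append, if_true, if_false,
    Bool.if_true_left]
  simp only [Nat.sub_sub, Nat.add_zero, Nat.zero_add, Bool.false_eq_true, if_false]
  push_cast [Nat.cast_min]
  split <;> omega

lemma preV (a b : List Bool) (t : ℕ) :
    pre (V a b) t = pre b t + (if t - b.length = 0 then 0 else 1)
      + (pre a (a.length - (t - (b.length + 1))) - bal a) := by
  rw [V, pre_append, pre_append, pre_singleton, pre_revflip]
  simp only [length_append, length_cons, length_nil, Nat.sub_sub, Nat.add_zero, Nat.zero_add,
    if_true]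

end DS

open List

namespace DS

lemma preW_left (k p : ℕ) (a b : List Bool) {t : ℕ} (ht : t ≤ k) :
    pre (W k p a b) t = t := by
  have H := preW k p a b t
  have e1 : t - k = 0 := by omega
  rw [e1] at H
  simp only [Nat.zero_sub, pre_zero] at H
  simp only [Nat.zero_sub, Nat.cast_zero] at H
  rw [H]
  have : min (t:ℤ) k = t := by omega
  rw [this]
  simp

lemma preW_mid (k p : ℕ) (a b : List Bool) {t : ℕ} (hk : 1 ≤ k) (ht : t ≤ a.length) :
    pre (W k p a b) (k + t) = (k : ℤ) + pre a t := by
  have H := preW k p a b (k + t)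
  have e1 : k + t - k = t := by omega
  rw [e1] at H
  have e2 : t - a.length = 0 := by omega
  rw [e2] at H
  simp only [Nat.zero_sub, pre_zero, Nat.cast_zero] at H
  rw [H]
  simp only [if_true]
  push_cast
  omega

lemma preW_right (k p : ℕ) (a b : List Bool) (t : ℕ) (hk : 1 ≤ k) :
    pre (W k p a b) (k + a.length + 1 + t)
      = (k : ℤ) + bal a - 1 + pre b t - min ((t - b.length : ℕ) : ℤ) p := by
  have H := preW k p a b (k + a.length + 1 + t)
  have e1 : k + a.length + 1 + t - k = a.length + 1 + t := by omega
  rw [e1] at H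
  have e2 : a.length + 1 + t - a.length = 1 + t := by omega
  rw [e2] at H
  have e3 : (1 : ℕ) + t - 1 = t := by omega
  rw [e3] at H
  rw [pre_of_length_le a (by omega)] at H
  rw [if_neg (by omega)] at H
  rw [H]
  push_cast
  omega

lemma W_length {n k p : ℕ} {a b : List Bool} (h : P n k p a b) :
    (W k p a b).length = 2 * n := by
  obtain ⟨h1, _⟩ := h
  simp [W]
  omega

lemma W_pre_pos {n k p : ℕ} {a b : List Bool} (hk : 1 ≤ k) (h : P n k p a b) :
    ∀ t, 0 < t → t < k + a.length + 1 → 0 < pre (W k p a b) t := by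
  intro t ht1 ht2
  rcases le_or_gt t k with h1 | h1
  · rw [preW_left k p a b h1]
    exact_mod_cast ht1
  · have e : t = k + (t - k) := by omega
    rw [e, preW_mid k p a b hk (by omega)]
    have := h.2.1 (t - k)
    omega

lemma W_zero {n k p : ℕ} {a b : List Bool} (hk : 1 ≤ k) (h : P n k p a b) :
    pre (W k p a b) (k + a.length + 1) = 0 := by
  have H := preW_right k p a b 0 hk
  simp only [Nat.add_zero, pre_zero, Nat.zero_sub, Nat.cast_zero] at H
  rw [H]
  have := h.2.2.1
  have : min (0 : ℤ) p = 0 := by omega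
  omega

lemma W_mem_L1 {n k p : ℕ} {a b : List Bool} (hk : 1 ≤ k) (hp : 1 ≤ p)
    (h : P n k p a b) : W k p a b ∈ L1 n k p := by
  obtain ⟨h1, ha1, ha2, hb1, hb2⟩ := h
  refine ⟨W_length ⟨h1, ha1, ha2, hb1, hb2⟩, ?_, ?_, ?_, ?_, ?_⟩
  · -- nonneg
    intro t
    rcases le_or_gt t (k + a.length) with h2 | h2
    · rcases le_or_gt t k with h3 | h3
      · rw [preW_left k p a b h3]; positivity
      · have e : t = k + (t - k) := by omega
        rw [e, preW_mid k p a b hk (by omega)]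
        have := ha1 (t - k)
        omega
    · have e : t = k + a.length + 1 + (t - k - a.length - 1) := by omega
      rw [e, preW_right k p a b _ hk]
      rcases le_or_gt (t - k - a.length - 1) b.length with h3 | h3
      · have e2 : t - k - a.length - 1 - b.length = 0 := by omega
        rw [e2]
        have := hb1 (t - k - a.length - 1)
        simp only [Nat.cast_zero]
        omega
      · rw [pre_of_length_le b (by omega), hb2]
        have : min (((t - k - a.length - 1 - b.length : ℕ)) : ℤ) p ≤ p := by omega
        omega
  · -- bal = 0
    have H := preW_right k p a b (b.length + p) hk
    rw [pre_of_length_le b (by omega), hb2] at H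
    rw [show b.length + p - b.length = p by omega] at H
    have hL : (W k p a b).length = 2*n := by simp [W]; omega
    have he : k + a.length + 1 + (b.length + p) = 2*n := by omega
    rw [he] at H
    rw [← hL, pre_length] at H
    rw [H]
    have : min ((p:ℕ) : ℤ) p = p := by omega
    omega
  · -- take k
    have : W k p a b = replicate k true ++ (a ++ ([false] ++ (b ++ replicate p false))) := by
      simp [W]
    rw [this, take_left' (by simp)]
  · -- drop 2n - p
    have : W k p a b = (replicate k true ++ a ++ [false] ++ b) ++ replicate p false := by
      simp [W]
    rw [this, drop_left' (by simp; omega)]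
  · exact ⟨k + a.length + 1, by omega, by omega,
      W_zero hk ⟨h1, ha1, ha2, hb1, hb2⟩⟩

lemma V_length {a b : List Bool} : (V a b).length = b.length + 1 + a.length := by
  simp [V]
  omega

lemma V_prop1 {n k p : ℕ} {a b : List Bool} (h : P n k p a b) :
    pre (V a b) b.length = (p : ℤ) := by
  have H := preV a b b.length
  rw [Nat.sub_self, show b.length - (b.length + 1) = 0 by omega] at H
  simp only [Nat.sub_zero, pre_length, if_pos rfl] at H
  rw [H, h.2.2.2.2]
  simp

lemma V_prop2 {n k p : ℕ} {a b : List Bool} (h : P n k p a b) :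
    ∀ t, b.length < t → (p : ℤ) + 1 ≤ pre (V a b) t := by
  intro t ht
  have H := preV a b t
  rw [if_neg (by omega)] at H
  rw [pre_of_length_le b (by omega), h.2.2.2.2] at H
  have h2 := h.2.1 (a.length - (t - (b.length + 1)))
  have h3 := h.2.2.1
  omega

lemma V_mem_L2 {n k p : ℕ} {a b : List Bool} (h : P n k p a b) :
    V a b ∈ L2 n (k + p) := by
  refine ⟨by rw [V_length]; have := h.1; omega, ?_, ?_⟩
  · intro t
    rcases le_or_gt t b.length with h1 | h1
    · have H := preV a b t
      rw [if_pos (by omega), show t - (b.length + 1) = 0 by omega] at H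
      simp only [Nat.sub_zero, pre_length] at H
      rw [H]
      have := h.2.2.2.1 t
      omega
    · have := V_prop2 h t h1
      have hp0 : (0:ℤ) ≤ p := by positivity
      omega
  · have hL : (V a b).length = b.length + 1 + a.length := V_length
    rw [← pre_length, hL]
    have := V_prop2 h (b.length + 1 + a.length) (by omega)
    have H := preV a b (b.length + 1 + a.length)
    rw [if_neg (by omega), show b.length + 1 + a.length - (b.length + 1) = a.length by omega,
      Nat.sub_self] at H
    simp only [pre_zero] at H
    rw [pre_of_length_le b (by omega), h.2.2.2.2] at H
    rw [H]
    have := h.2.2.1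
    push_cast
    omega

lemma revflip_inj {x y : List Bool} (h : x.reverse.map not = y.reverse.map not) : x = y := by
  have := congrArg (fun l => (l.map not).reverse) h
  simpa [map_map, Function.comp_def, Bool.not_not] using this

lemma Vuniq {n k p : ℕ} {a b a' b' : List Bool} (h : P n k p a b) (h' : P n k p a' b')
    (e : V a b = V a' b') : a = a' ∧ b = b' := by
  have key : ∀ (a b a' b' : List Bool), P n k p a b → P n k p a' b' →
      V a b = V a' b' → ¬ (b.length < b'.length) := by
    intro a b a' b' h h' e hlt
    have h1 := V_prop1 h'
    have h2 := V_prop2 h b'.length hlt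
    rw [← e] at h1
    omega
  have hbb : b.length = b'.length := by
    have k1 := key a b a' b' h h' e
    have k2 := key a' b' a b h' h e.symm
    omega
  have e' : (b ++ [true]) ++ a.reverse.map not = (b' ++ [true]) ++ a'.reverse.map not := e
  obtain ⟨e1, e2⟩ := append_inj e' (by simp [hbb])
  have hba : b = b' := by
    obtain ⟨e3, _⟩ := append_inj e1 (by simp [hbb])
    exact e3
  exact ⟨revflip_inj e2, hba⟩

lemma Wuniq {n k p : ℕ} {a b a' b' : List Bool} (hk : 1 ≤ k)
    (h : P n k p a b) (h' : P n k p a' b')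
    (e : W k p a b = W k p a' b') : a = a' ∧ b = b' := by
  have key : ∀ (a b a' b' : List Bool), P n k p a b → P n k p a' b' →
      W k p a b = W k p a' b' → ¬ (a.length < a'.length) := by
    intro a b a' b' h h' e hlt
    have h1 := W_zero hk h
    have h2 := W_pre_pos hk h' (k + a.length + 1) (by omega) (by omega)
    rw [← e] at h2
    omega
  have haa : a.length = a'.length := by
    have k1 := key a b a' b' h h' e
    have k2 := key a' b' a b h' h e.symm
    omega
  have hbb : b.length = b'.length := by
    have := h.1; have := h'.1; omega
  have e0 : (replicate k true ++ a ++ [false] ++ b) ++ replicate p false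
      = (replicate k true ++ a' ++ [false] ++ b') ++ replicate p false := by
    have eW := e
    simp only [W] at eW
    simp [append_assoc] at eW ⊢
    exact eW
  obtain ⟨e1, _⟩ := append_inj e0 (by simp [haa, hbb])
  obtain ⟨e2, e3⟩ := append_inj e1 (by simp [haa])
  have e4 : replicate k true ++ a = replicate k true ++ a' := by
    obtain ⟨e5, _⟩ := append_inj e2 (by simp [haa])
    exact e5
  exact ⟨append_cancel_left e4, e3⟩

lemma pre_drop {l : List Bool} {m : ℕ} (hm : m ≤ l.length) (t : ℕ) :
    pre (l.drop m) t = pre l (m + t) - pre l m := by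
  have h1 : pre l (m + t) = pre (l.take m) (m + t) + pre (l.drop m) (m + t - (l.take m).length) := by
    conv_lhs => rw [← take_append_drop m l]
    rw [pre_append]
  rw [length_take, min_eq_left hm] at h1
  rw [show m + t - m = t by omega] at h1
  have h3 : pre (take m l) (m + t) = bal (take m l) :=
    pre_of_length_le (take m l) (by rw [length_take]; omega)
  have h2 : bal (take m l) = pre l m := rfl
  rw [h3, h2] at h1
  omega

lemma decompL1 {n k p : ℕ} {w : List Bool} (hk : 1 ≤ k) (hp : 1 ≤ p)
    (hw : w ∈ L1 n k p) : ∃ a b, P n k p a b ∧ w = W k p a b := by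
  obtain ⟨hlen, hnn, hbal, htk, hdp, hex⟩ := hw
  classical
  have hple : p ≤ 2*n := by
    have hl2 := congrArg List.length hdp
    rw [length_drop, length_replicate, hlen] at hl2
    omega
  set s := Nat.find hex with hsdef
  obtain ⟨hs0, hs2n, hsz⟩ := Nat.find_spec hex
  have hpos : ∀ t, 0 < t → t < s → 1 ≤ pre w t := by
    intro t ht1 ht2
    have h1 := Nat.find_min hex ht2
    have h2 := hnn t
    have h3 : pre w t ≠ 0 := by
      intro h0
      exact h1 ⟨ht1, by omega, h0⟩
    omega
  have hprek : ∀ t, t ≤ k → pre w t = t := by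
    intro t ht
    have h1 : w.take t = replicate t true := by
      have h2 : w.take t = (w.take k).take t := by
        rw [take_take, min_eq_left ht]
      rw [h2, htk, take_replicate, min_eq_left ht]
    rw [pre, h1]
    simp
  have hks : k < s := by
    by_contra hc
    push_neg at hc
    have h1 := hprek s hc
    rw [hsz] at h1
    omega
  have hwdec : w = w.take (2*n - p) ++ replicate p false := by
    conv_lhs => rw [← take_append_drop (2*n - p) w, hdp]
  have hkey : ∀ t, 2*n - p ≤ t →
      pre w t = pre w (2*n - p) - min ((t - (2*n - p) : ℕ) : ℤ) p := by
    intro t ht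
    have h0 : pre w t = pre (w.take (2*n-p)) t
        + pre (replicate p false) (t - (w.take (2*n-p)).length) := by
      conv_lhs => rw [hwdec]
      rw [pre_append]
    have hlt : (w.take (2*n-p)).length = 2*n - p := by rw [length_take]; omega
    rw [hlt] at h0
    have h3 : pre (w.take (2*n-p)) t = bal (w.take (2*n-p)) :=
      pre_of_length_le (w.take (2*n-p)) (by rw [hlt]; exact ht)
    have h2 : bal (w.take (2*n - p)) = pre w (2*n - p) := rfl
    rw [h3, h2, pre_replicate] at h0
    rw [h0]
    simp
    ring
  have hA : pre w (2*n - p) = p := by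
    have h1 := hkey (2*n) (by omega)
    have h2 : pre w (2*n) = bal w := pre_of_length_le w (by omega)
    rw [h2, hbal, show 2*n - (2*n - p) = p by omega] at h1
    omega
  have hs2np : s ≤ 2*n - p := by
    by_contra hc
    push_neg at hc
    have h1 := hkey s (by omega)
    rw [hsz, hA] at h1
    omega
  have hs1 : 1 ≤ pre w (s-1) := hpos (s-1) (by omega) (by omega)
  have habs := pre_step_abs w (s-1)
  rw [show s - 1 + 1 = s by omega, hsz] at habs
  have hs1' : pre w (s-1) = 1 := by
    rcases abs_le.mp habs with ⟨c1, c2⟩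
    omega
  have hslen : s - 1 < w.length := by omega
  have hstep := pre_succ w (s-1) hslen
  rw [show s - 1 + 1 = s by omega, hsz, hs1'] at hstep
  have hgf : w.get ⟨s-1, hslen⟩ = false := by
    cases hb : w.get ⟨s-1, hslen⟩
    · rfl
    · rw [hb] at hstep
      simp at hstep
  set a := (w.drop k).take (s - 1 - k) with ha
  set b := (w.drop s).take (2*n - p - s) with hb
  have la : a.length = s - 1 - k := by
    rw [ha, length_take, length_drop, hlen]; omega
  have lb : b.length = 2*n - p - s := by
    rw [hb, length_take, length_drop, hlen]; omega
  have d2 : w.drop k = a ++ w.drop (s-1) := by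
    conv_lhs => rw [← take_append_drop (s-1-k) (w.drop k)]
    rw [drop_drop, show k + (s-1-k) = s - 1 by omega]
  have d3 : w.drop (s-1) = false :: w.drop s := by
    rw [drop_eq_getElem_cons hslen]
    rw [show s - 1 + 1 = s by omega]
    have : w[s-1] = false := hgf
    rw [this]
  have d4 : w.drop s = b ++ replicate p false := by
    conv_lhs => rw [← take_append_drop (2*n - p - s) (w.drop s)]
    rw [drop_drop, show s + (2*n - p - s) = 2*n - p by omega, hdp]
  have hwW : w = W k p a b := by
    rw [W]
    conv_lhs => rw [← take_append_drop k w, htk, d2, d3, d4]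
    simp [append_assoc]
  have ha2 : (k:ℤ) + bal a = 1 := by
    have H := preW_mid k p a b hk (le_refl a.length)
    rw [pre_length, ← hwW, show k + a.length = s - 1 by omega] at H
    omega
  have ha1 : ∀ t, 1 ≤ (k:ℤ) + pre a t := by
    intro t
    rcases le_or_gt t a.length with h1 | h1
    · have H := preW_mid k p a b hk h1
      rw [← hwW] at H
      have h2 := hpos (k + t) (by omega) (by omega)
      omega
    · rw [pre_of_length_le a (by omega)]
      omega
  have hb1' : ∀ t, t ≤ b.length → pre b t = pre w (s + t) := by
    intro t ht
    have H := preW_right k p a b t hk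
    rw [← hwW, show k + a.length + 1 + t = s + t by omega] at H
    rw [show t - b.length = 0 by omega] at H
    simp only [Nat.cast_zero] at H
    omega
  have hb2 : bal b = (p:ℤ) := by
    have h1 := hb1' b.length le_rfl
    rw [pre_length, show s + b.length = 2*n - p by omega, hA] at h1
    exact h1
  have hb1 : ∀ t, 0 ≤ pre b t := by
    intro t
    rcases le_or_gt t b.length with h1 | h1
    · rw [hb1' t h1]
      exact hnn _
    · rw [pre_of_length_le b (by omega), hb2]
      positivity
  exact ⟨a, b, ⟨by omega, ha1, ha2, hb1, hb2⟩, hwW⟩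

lemma decompL2 {n k p : ℕ} {v : List Bool} (hk : 1 ≤ k) (hp : 1 ≤ p) (hdn : k + p ≤ n)
    (hv : v ∈ L2 n (k+p)) : ∃ a b, P n k p a b ∧ v = V a b := by
  obtain ⟨hlen, hnn, hbal⟩ := hv
  classical
  set N := 2*n - (k+p) with hN
  have hN1 : 1 ≤ N := by omega
  have hvN : pre v N = (k:ℤ) + p := by
    rw [← hlen, pre_length, hbal]
    push_cast
    ring
  have hex : ∃ t, t ≤ N ∧ pre v t = p := by
    obtain ⟨t, h1, h2, h3⟩ := ivt (pre v) (pre_step_abs v) p N 0 (by omega) (by simp)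
      (by rw [hvN]; push_cast; omega)
    exact ⟨t, h2, h3⟩
  obtain ⟨t0, ht0, ht0'⟩ := hex
  set r := Nat.findGreatest (fun t => pre v t = p) N with hr
  have hrspec : pre v r = (p:ℤ) := by
    have := Nat.findGreatest_spec (P := fun t => pre v t = (p:ℤ)) ht0 ht0'
    simpa using this
  have hrN : r ≤ N := Nat.findGreatest_le N
  have hgt : ∀ t, r < t → t ≤ N → (p:ℤ) + 1 ≤ pre v t := by
    intro t ht1 ht2
    have h1 : ¬ (pre v t = p) := by
      have := Nat.findGreatest_is_greatest (P := fun t => pre v t = (p:ℤ)) ht1 ht2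
      simpa using this
    by_contra hc
    push_neg at hc
    obtain ⟨t', c1, c2, c3⟩ := ivt (pre v) (pre_step_abs v) p N t ht2 (by omega)
      (by rw [hvN]; push_cast; omega)
    have h2 : ¬ (pre v t' = p) := by
      have := Nat.findGreatest_is_greatest (P := fun t => pre v t = (p:ℤ)) (by omega) c2
      simpa using this
    exact h2 c3
  have hrN' : r < N := by
    by_contra hc
    push_neg at hc
    have : r = N := by omega
    rw [this, hvN] at hrspec
    omega
  have hrlen : r < v.length := by omega
  have hstep := pre_succ v r hrlen
  have hr1 : (p:ℤ) + 1 ≤ pre v (r+1) := hgt (r+1) (by omega) (by omega)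
  have hgr : v.get ⟨r, hrlen⟩ = true := by
    cases hb : v.get ⟨r, hrlen⟩
    · rw [hb] at hstep
      simp at hstep
      omega
    · rfl
  set z := v.drop (r+1) with hzdef
  set b := v.take r with hbdef
  set a := (z.map not).reverse with hadef
  have lb : b.length = r := by rw [hbdef, length_take]; omega
  have lz : z.length = N - r - 1 := by rw [hzdef, length_drop]; omega
  have la : a.length = N - r - 1 := by rw [hadef, length_reverse, length_map]; omega
  have hrev : a.reverse.map not = z := by
    rw [hadef]
    simp [map_map, Function.comp_def, Bool.not_not]
  have hvV : v = V a b := by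
    rw [V, hrev]
    conv_lhs => rw [← take_append_drop r v]
    rw [drop_eq_getElem_cons hrlen]
    have h1 : v[r] = true := hgr
    rw [h1]
    simp [hbdef, hzdef]
  have hb2 : bal b = (p:ℤ) := by
    rw [hbdef]
    exact hrspec
  have hb1 : ∀ t, 0 ≤ pre b t := by
    intro t
    rw [hbdef, pre_take]
    exact hnn _
  have hbalz : bal z = (k:ℤ) - 1 := by
    rw [hzdef, bal_drop]
    have h1 : pre v (r+1) = (p:ℤ) + 1 := by
      rcases abs_le.mp (pre_step_abs v r) with ⟨c1, c2⟩
      omega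
    rw [hbal, h1]
    push_cast
    ring
  have hbala : bal a = 1 - (k:ℤ) := by
    rw [hadef, bal_reverse, bal_map_not, hbalz]
    ring
  have hprez : ∀ j, j ≤ z.length → pre z j = pre v (r+1+j) - ((p:ℤ)+1) := by
    intro j hj
    rw [hzdef, pre_drop (by omega)]
    have h1 : pre v (r+1) = (p:ℤ) + 1 := by
      rcases abs_le.mp (pre_step_abs v r) with ⟨c1, c2⟩
      omega
    rw [h1]
  have ha1 : ∀ t, 1 ≤ (k:ℤ) + pre a t := by
    intro t
    rcases le_or_gt t a.length with h1 | h1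
    · have hmap : a = z.reverse.map not := by
        rw [hadef, map_reverse]
      set j := z.length - t with hj
      have h2 := hprez j (by omega)
      have h3 := hgt (r+1+j) (by omega) (by omega)
      rw [hmap, pre_revflip, h2, hbalz]
      omega
    · rw [pre_of_length_le a (by omega), hbala]
      omega
  exact ⟨a, b, ⟨by omega, ha1, by rw [hbala]; ring, hb1, hb2⟩, hvV⟩

open scoped Classical in
noncomputable def Phi (n k p : ℕ) (w : List Bool) : List Bool :=
  if h : ∃ ab : List Bool × List Bool, P n k p ab.1 ab.2 ∧ w = W k p ab.1 ab.2 then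
    V h.choose.1 h.choose.2
  else []

theorem bijOn_Phi {n k p : ℕ} (hk : 1 ≤ k) (hp : 1 ≤ p) (hdn : k + p ≤ n) :
    Set.BijOn (Phi n k p) (L1 n k p) (L2 n (k + p)) := by
  have hPhi : ∀ w, ∀ a b, P n k p a b → w = W k p a b → Phi n k p w = V a b := by
    intro w a b hP hwW
    have hex : ∃ ab : List Bool × List Bool, P n k p ab.1 ab.2 ∧ w = W k p ab.1 ab.2 :=
      ⟨(a, b), hP, hwW⟩
    classical
    rw [Phi]
    rw [dif_pos hex]
    obtain ⟨hP', hwW'⟩ := hex.choose_spec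
    obtain ⟨e1, e2⟩ := Wuniq hk hP' hP (by rw [← hwW', ← hwW])
    rw [e1, e2]
  refine ⟨?_, ?_, ?_⟩
  · intro w hw
    obtain ⟨a, b, hP, hwW⟩ := decompL1 hk hp hw
    rw [hPhi w a b hP hwW]
    exact V_mem_L2 hP
  · intro w1 h1 w2 h2 he
    obtain ⟨a1, b1, hP1, hW1⟩ := decompL1 hk hp h1
    obtain ⟨a2, b2, hP2, hW2⟩ := decompL1 hk hp h2
    rw [hPhi w1 a1 b1 hP1 hW1, hPhi w2 a2 b2 hP2 hW2] at he
    obtain ⟨e1, e2⟩ := Vuniq hP1 hP2 he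
    rw [hW1, hW2, e1, e2]
  · intro v hv
    obtain ⟨a, b, hP, hvV⟩ := decompL2 hk hp hdn hv
    refine ⟨W k p a b, W_mem_L1 hk hp hP, ?_⟩
    rw [hPhi _ a b hP rfl, hvV]

end DS

namespace DS
open List

lemma count_take_ofFn {m : ℕ} (f : Fin m → Bool) (bb : Bool) (t : ℕ) :
    ((List.ofFn f).take t).count bb
      = (Finset.univ.filter (fun i : Fin m => (i : ℕ) < t ∧ f i = bb)).card := by
  induction t with
  | zero => simp
  | succ t ih =>
    rcases le_or_gt m t with h | h
    · have h1 : (List.ofFn f).take (t+1) = (List.ofFn f).take t := by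
        rw [take_of_length_le (by simp; omega), take_of_length_le (by simp; omega)]
      rw [h1, ih]
      congr 1
      apply Finset.filter_congr
      intro i _
      have hi := i.isLt
      constructor
      · rintro ⟨h2, h3⟩
        exact ⟨by omega, h3⟩
      · rintro ⟨h2, h3⟩
        exact ⟨by omega, h3⟩
    · have hlt : t < (List.ofFn f).length := by simp [h]
      have h1 : (List.ofFn f).take (t+1) = (List.ofFn f).take t ++ [f ⟨t, h⟩] := by
        rw [take_succ, getElem?_eq_getElem hlt]
        simp
      rw [h1, count_append, ih, count_singleton']
      by_cases hfb : f ⟨t, h⟩ = bb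
      · rw [if_pos hfb]
        have h2 : (Finset.univ.filter (fun i : Fin m => (i:ℕ) < t+1 ∧ f i = bb))
            = insert ⟨t, h⟩ (Finset.univ.filter (fun i : Fin m => (i:ℕ) < t ∧ f i = bb)) := by
          ext i
          simp only [Finset.mem_filter, Finset.mem_univ, true_and, Finset.mem_insert]
          constructor
          · rintro ⟨h2, h3⟩
            rcases Nat.lt_or_ge (i:ℕ) t with h4 | h4
            · exact Or.inr ⟨h4, h3⟩
            · left
              apply Fin.ext
              simp
              omega
          · rintro (rfl | ⟨h2, h3⟩)
            · exact ⟨by simp, hfb⟩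
            · exact ⟨by omega, h3⟩
        rw [h2, Finset.card_insert_of_notMem (by simp)]
      · rw [if_neg hfb]
        have h2 : (Finset.univ.filter (fun i : Fin m => (i:ℕ) < t+1 ∧ f i = bb))
            = (Finset.univ.filter (fun i : Fin m => (i:ℕ) < t ∧ f i = bb)) := by
          apply Finset.filter_congr
          intro i _
          constructor
          · rintro ⟨h2, h3⟩
            refine ⟨?_, h3⟩
            have h4 : (i:ℕ) ≠ t := by
              intro he
              apply hfb
              rw [← h3]
              congr 1
              exact Fin.ext he.symm
            omega
          · rintro ⟨h2, h3⟩
            exact ⟨by omega, h3⟩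
        rw [h2]
        omega

lemma pre_ofFn {m : ℕ} (f : Fin m → Bool) (t : ℕ) :
    pre (List.ofFn f) t = (upCount f t : ℤ) - (downCount f t : ℤ) := by
  have h1 : pre (List.ofFn f) t
      = (((List.ofFn f).take t).count true : ℤ) - ((List.ofFn f).take t).count false := rfl
  rw [h1, count_take_ofFn, count_take_ofFn, upCount, downCount]

lemma mem_L1_iff {n k p : ℕ} (hkn : k ≤ 2*n) (hpn : p ≤ 2*n) (f : Fin (2*n) → Bool) :
    (IsDyckPath f ∧ (∀ i : Fin (2*n), (i : ℕ) < k → f i = true) ∧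
      (∀ i : Fin (2*n), 2*n - p ≤ (i : ℕ) → f i = false) ∧
      (∃ t, 0 < t ∧ t < 2*n ∧ upCount f t = downCount f t))
    ↔ List.ofFn f ∈ L1 n k p := by
  constructor
  · rintro ⟨⟨hd1, hd2⟩, hfirst, hlast, t0, ht1, ht2, ht3⟩
    refine ⟨by simp, ?_, ?_, ?_, ?_, t0, ht1, ht2, by rw [pre_ofFn]; omega⟩
    · intro t
      rcases le_or_gt t (2*n) with h | h
      · rw [pre_ofFn]
        have := hd1 t h
        omega
      · have h2 : pre (List.ofFn f) t = pre (List.ofFn f) (2*n) := by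
          rw [pre_of_length_le _ (by simp; omega), pre_of_length_le _ (by simp)]
        rw [h2, pre_ofFn]
        have := hd1 (2*n) le_rfl
        omega
    · have h2 : bal (List.ofFn f) = pre (List.ofFn f) (2*n) :=
        (pre_of_length_le _ (by simp)).symm
      rw [h2, pre_ofFn, hd2]
      ring
    · apply List.ext_getElem
      · simp [length_take]
        omega
      · intro i h1 h2
        rw [List.getElem_take, List.getElem_ofFn, List.getElem_replicate]
        apply hfirst
        simp only [length_replicate] at h2
        simpa using h2
    · apply List.ext_getElem
      · simp [length_drop]
        omega
      · intro i h1 h2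
        rw [List.getElem_drop, List.getElem_ofFn, List.getElem_replicate]
        apply hlast
        simp
  · rintro ⟨hlen, hnn, hbal, htk, hdp, t0, ht1, ht2, ht3⟩
    have hfirst : ∀ i : Fin (2*n), (i : ℕ) < k → f i = true := by
      intro i hi
      have hh : (i:ℕ) < (List.take k (List.ofFn f)).length := by
        simp [length_take]
        omega
      have h2 : (List.take k (List.ofFn f))[(i:ℕ)]'hh = f i := by
        rw [List.getElem_take, List.getElem_ofFn]
      have h3 : (List.take k (List.ofFn f))[(i:ℕ)]'hh = true := by
        simp [htk]
      rw [← h2, h3]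
    have hlast : ∀ i : Fin (2*n), 2*n - p ≤ (i : ℕ) → f i = false := by
      intro i hi
      have hh : (i:ℕ) - (2*n - p) < (List.drop (2*n - p) (List.ofFn f)).length := by
        simp [length_drop]
        omega
      have h2 : (List.drop (2*n - p) (List.ofFn f))[(i:ℕ) - (2*n - p)]'hh = f i := by
        rw [List.getElem_drop, List.getElem_ofFn]
        congr 1
        apply Fin.ext
        simp
        omega
      have h3 : (List.drop (2*n - p) (List.ofFn f))[(i:ℕ) - (2*n - p)]'hh = false := by
        simp [hdp]
      rw [← h2, h3]
    refine ⟨⟨?_, ?_⟩, hfirst, hlast, t0, ht1, ht2, ?_⟩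
    · intro t _
      have := hnn t
      rw [pre_ofFn] at this
      omega
    · have h2 : pre (List.ofFn f) (2*n) = 0 := by
        have h3 : bal (List.ofFn f) = pre (List.ofFn f) (2*n) :=
          (pre_of_length_le _ (by simp)).symm
        rw [← h3, hbal]
      rw [pre_ofFn] at h2
      omega
    · have := ht3
      rw [pre_ofFn] at this
      omega

theorem bijOn_ofFn {n k p : ℕ} (hkn : k ≤ 2*n) (hpn : p ≤ 2*n) :
    Set.BijOn (fun f : Fin (2*n) → Bool => List.ofFn f)
      {f : Fin (2 * n) → Bool | IsDyckPath f ∧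
        (∀ i : Fin (2 * n), (i : ℕ) < k → f i = true) ∧
        (∀ i : Fin (2 * n), 2 * n - p ≤ (i : ℕ) → f i = false) ∧
        (∃ t, 0 < t ∧ t < 2 * n ∧ upCount f t = downCount f t)}
      (L1 n k p) := by
  refine ⟨?_, ?_, ?_⟩
  · intro f hf
    exact (mem_L1_iff hkn hpn f).mp hf
  · intro f1 h1 f2 h2 he
    funext i
    have h3 := congrArg (fun l : List Bool => l.getD (i:ℕ) false) he
    simpa using h3
  · intro l hl
    have hlen : l.length = 2*n := hl.1
    set f : Fin (2*n) → Bool := fun i => l[(i:ℕ)]'(by rw [hlen]; exact i.isLt) with hf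
    have hofn : List.ofFn f = l := by
      apply List.ext_getElem
      · simp [hlen]
      · intro i h1 h2
        rw [List.getElem_ofFn]
    refine ⟨f, ?_, hofn⟩
    apply (mem_L1_iff hkn hpn f).mpr
    rw [hofn]
    exact hl

end DS

namespace DS
open List Finset

lemma card_filter_lt_emb {N c : ℕ} (s : Finset (Fin N)) (h : s.card = c) (j : Fin c) :
    (s.filter (fun y => y < s.orderEmbOfFin h j)).card = (j : ℕ) := by
  classical
  have key : (Finset.Iio j).card = (s.filter (fun y => y < s.orderEmbOfFin h j)).card := by
    apply Finset.card_bij (fun i _ => s.orderEmbOfFin h i)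
    · intro i hi
      rw [Finset.mem_filter]
      exact ⟨s.orderEmbOfFin_mem h i, (s.orderEmbOfFin h).strictMono (Finset.mem_Iio.mp hi)⟩
    · intro i1 _ i2 _ he
      exact (s.orderEmbOfFin h).injective he
    · intro y hy
      rw [Finset.mem_filter] at hy
      have hy1 : y ∈ Set.range ⇑(s.orderEmbOfFin h) := by
        rw [Finset.range_orderEmbOfFin]
        exact hy.1
      obtain ⟨i, hi⟩ := hy1
      refine ⟨i, ?_, hi⟩
      rw [Finset.mem_Iio]
      have := hy.2
      rw [← hi] at this
      exact (s.orderEmbOfFin h).strictMono.lt_iff_lt.mp this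
  rw [← key, Fin.card_Iio]

lemma emb_lt_of_card_lt {N c : ℕ} (s : Finset (Fin N)) (h : s.card = c) (j : Fin c)
    (x : Fin N) (hc : (j : ℕ) < (s.filter (fun y => y < x)).card) :
    s.orderEmbOfFin h j < x := by
  classical
  by_contra hle
  push_neg at hle
  have hsub : s.filter (fun y => y < x) ⊆ s.filter (fun y => y < s.orderEmbOfFin h j) := by
    intro y hy
    rw [Finset.mem_filter] at hy ⊢
    exact ⟨hy.1, lt_of_lt_of_le hy.2 hle⟩
  have h2 := Finset.card_le_card hsub
  rw [card_filter_lt_emb s h j] at h2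
  omega

lemma card_filter_nat_count {N : ℕ} (f : Fin N → Bool) (bb : Bool) (t : ℕ) :
    ((Finset.univ.filter (fun v : Fin N => f v = bb)).filter (fun y : Fin N => (y:ℕ) < t)).card
      = ((List.ofFn f).take t).count bb := by
  rw [count_take_ofFn]
  congr 1
  rw [Finset.filter_filter]
  apply Finset.filter_congr
  intro i _
  exact and_comm

lemma compl_filter_bool {N : ℕ} (f : Fin N → Bool) :
    (Finset.univ.filter (fun v : Fin N => f v = true))ᶜ
      = Finset.univ.filter (fun v : Fin N => f v = false) := by
  classical
  ext v
  simp [Bool.not_eq_true]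

lemma take_succ_ofFn {N : ℕ} (f : Fin N → Bool) {t : ℕ} (h : t < N) :
    (List.ofFn f).take (t+1) = (List.ofFn f).take t ++ [f ⟨t, h⟩] := by
  rw [take_succ, getElem?_eq_getElem (by simp [h])]
  simp

lemma col_of_ballot {N n' c : ℕ} (f : Fin N → Bool)
    (hS : (Finset.univ.filter (fun v : Fin N => f v = true)).card = n')
    (hSc : (Finset.univ.filter (fun v : Fin N => f v = true))ᶜ.card = c)
    (hb : ∀ t, 0 ≤ pre (List.ofFn f) t) (j : Fin c) (j' : Fin n') (hjj' : (j' : ℕ) = (j : ℕ)) :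
    (Finset.univ.filter (fun v : Fin N => f v = true)).orderEmbOfFin hS j'
      < (Finset.univ.filter (fun v : Fin N => f v = true))ᶜ.orderEmbOfFin hSc j := by
  classical
  set S := Finset.univ.filter (fun v : Fin N => f v = true) with hSdef
  set x := Sᶜ.orderEmbOfFin hSc j with hxdef
  have hxS : x ∈ Sᶜ := Finset.orderEmbOfFin_mem _ _ _
  have hfx : f x = false := by
    rw [Finset.mem_compl, hSdef] at hxS
    simp only [Finset.mem_filter, Finset.mem_univ, true_and] at hxS
    simpa using hxS
  have e1 : ((List.ofFn f).take (x:ℕ)).count false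
      = (Sᶜ.filter (fun y : Fin N => (y:ℕ) < (x:ℕ))).card := by
    rw [compl_filter_bool]
    exact (card_filter_nat_count f false _).symm
  have e2 : Sᶜ.filter (fun y : Fin N => (y:ℕ) < (x:ℕ)) = Sᶜ.filter (fun y => y < x) :=
    Finset.filter_congr (fun y _ => Iff.symm Fin.lt_def)
  have hcf : ((List.ofFn f).take (x:ℕ)).count false = (j:ℕ) := by
    rw [e1, e2, hxdef]
    exact card_filter_lt_emb Sᶜ hSc j
  have hxN : (x:ℕ) < N := x.isLt
  have hstep := take_succ_ofFn f hxN
  have hfx' : f ⟨(x:ℕ), hxN⟩ = false := by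
    rw [show (⟨(x:ℕ), hxN⟩ : Fin N) = x from Fin.ext rfl]
    exact hfx
  have hcf1 : ((List.ofFn f).take ((x:ℕ)+1)).count false = (j:ℕ) + 1 := by
    rw [hstep, count_append, hcf, hfx']
    simp
  have hct1 : ((List.ofFn f).take ((x:ℕ)+1)).count true
      = ((List.ofFn f).take (x:ℕ)).count true := by
    rw [hstep, count_append, hfx']
    simp
  have hbx := hb ((x:ℕ)+1)
  have hpre : pre (List.ofFn f) ((x:ℕ)+1)
      = ((((List.ofFn f).take ((x:ℕ)+1)).count true : ℤ))
        - (((List.ofFn f).take ((x:ℕ)+1)).count false : ℤ) := rfl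
  rw [hpre, hcf1, hct1] at hbx
  have hcard : (j:ℕ) < (S.filter (fun y => y < x)).card := by
    have h1 := card_filter_nat_count f true (x:ℕ)
    have h2 : S.filter (fun y : Fin N => (y:ℕ) < (x:ℕ)) = S.filter (fun y => y < x) :=
      Finset.filter_congr (fun y _ => Iff.symm Fin.lt_def)
    rw [← hSdef] at h1
    rw [h2] at h1
    omega
  exact emb_lt_of_card_lt S hS j' x (by rw [hjj']; exact hcard)

set_option maxHeartbeats 1000000 in
lemma ballot_of_col {N n' c : ℕ} (hcn : c ≤ n') (f : Fin N → Bool)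
    (hS : (Finset.univ.filter (fun v : Fin N => f v = true)).card = n')
    (hSc : (Finset.univ.filter (fun v : Fin N => f v = true))ᶜ.card = c)
    (hcol : ∀ (j : Fin c) (j' : Fin n'), (j' : ℕ) = (j : ℕ) →
      (Finset.univ.filter (fun v : Fin N => f v = true)).orderEmbOfFin hS j'
        < (Finset.univ.filter (fun v : Fin N => f v = true))ᶜ.orderEmbOfFin hSc j) :
    ∀ t, 0 ≤ pre (List.ofFn f) t := by
  classical
  intro t
  set S := Finset.univ.filter (fun v : Fin N => f v = true) with hSdef
  set jn := ((List.ofFn f).take t).count false with hjn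
  have hpre : pre (List.ofFn f) t
      = ((((List.ofFn f).take t).count true : ℤ)) - (jn : ℤ) := rfl
  have e1 : (Sᶜ.filter (fun y : Fin N => (y:ℕ) < t)).card = jn := by
    rw [compl_filter_bool]
    exact card_filter_nat_count f false t
  have e2 : (S.filter (fun y : Fin N => (y:ℕ) < t)).card
      = ((List.ofFn f).take t).count true := card_filter_nat_count f true t
  rcases Nat.eq_zero_or_pos jn with h0 | h0
  · rw [hpre, h0]
    have : (0:ℤ) ≤ (((List.ofFn f).take t).count true : ℤ) := by positivity
    omega
  · have hjc : jn ≤ c := by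
      have h1 := Finset.card_filter_le Sᶜ (fun y : Fin N => (y:ℕ) < t)
      omega
    set j : Fin c := ⟨jn - 1, by omega⟩ with hjdef
    set j' : Fin n' := ⟨jn - 1, by omega⟩ with hj'def
    set x := Sᶜ.orderEmbOfFin hSc j with hxdef
    have hA1 : (Sᶜ.filter (fun y => y < x)).card = jn - 1 := by
      have h1 := card_filter_lt_emb Sᶜ hSc j
      have hv : (j:ℕ) = jn - 1 := rfl
      rw [hv] at h1
      exact h1
    have hxt : (x:ℕ) < t := by
      by_contra hc2
      push_neg at hc2
      have hsub : Sᶜ.filter (fun y : Fin N => (y:ℕ) < t) ⊆ Sᶜ.filter (fun y => y < x) := by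
        intro y hy
        rw [Finset.mem_filter] at hy ⊢
        refine ⟨hy.1, ?_⟩
        rw [Fin.lt_def]
        omega
      have := Finset.card_le_card hsub
      omega
    have htop : S.orderEmbOfFin hS j' < x := hcol j j' rfl
    have hsub2 : (Finset.univ.filter (fun i : Fin n' => i ≤ j')).image (S.orderEmbOfFin hS)
        ⊆ S.filter (fun y : Fin N => (y:ℕ) < t) := by
      intro y hy
      rw [Finset.mem_image] at hy
      obtain ⟨i, hi, rfl⟩ := hy
      rw [Finset.mem_filter] at hi ⊢
      refine ⟨Finset.orderEmbOfFin_mem _ _ _, ?_⟩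
      have h5 : S.orderEmbOfFin hS i ≤ S.orderEmbOfFin hS j' :=
        (S.orderEmbOfFin hS).monotone hi.2
      have h6 : S.orderEmbOfFin hS i < x := lt_of_le_of_lt h5 htop
      rw [Fin.lt_def] at h6
      omega
    have hcard2 : ((Finset.univ.filter (fun i : Fin n' => i ≤ j')).image
        (S.orderEmbOfFin hS)).card = jn := by
      rw [Finset.card_image_of_injective _ (S.orderEmbOfFin hS).injective]
      have h1 : Finset.univ.filter (fun i : Fin n' => i ≤ j') = Finset.Iic j' := by
        ext i
        simp
      rw [h1, Fin.card_Iic]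
      have hv : (j' : ℕ) = jn - 1 := rfl
      rw [hv]
      omega
    have hct : jn ≤ (S.filter (fun y : Fin N => (y:ℕ) < t)).card := by
      have := Finset.card_le_card hsub2
      omega
    rw [hpre]
    omega

end DS

namespace DS
open List Finset

lemma ofFn_getD {N : ℕ} {l : List Bool} (hlen : l.length = N) :
    List.ofFn (fun v : Fin N => l.getD (v:ℕ) false) = l := by
  apply List.ext_getElem
  · simp [hlen]
  · intro i h1 h2
    rw [List.getElem_ofFn]
    exact List.getD_eq_getElem l false (by omega)

lemma getD_ofFn {N : ℕ} (f : Fin N → Bool) (v : Fin N) :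
    (List.ofFn f).getD (v:ℕ) false = f v := by
  rw [List.getD_eq_getElem _ _ (by simp), List.getElem_ofFn]

lemma card_filter_eq_count {N : ℕ} (f : Fin N → Bool) (bb : Bool) :
    (Finset.univ.filter (fun v : Fin N => f v = bb)).card = (List.ofFn f).count bb := by
  have h := card_filter_nat_count f bb N
  rw [List.take_of_length_le (by simp)] at h
  rw [Finset.filter_true_of_mem (fun y _ => y.isLt)] at h
  exact h

lemma L2_counts {n d : ℕ} {l : List Bool} (hdn : d ≤ n) (hl : l ∈ L2 n d) :
    l.count true = n ∧ l.count false = n - d := by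
  obtain ⟨hlen, hnn, hbal⟩ := hl
  have h1 := count_true_add_count_false l
  rw [hlen] at h1
  have h2 : (l.count true : ℤ) - l.count false = d := hbal
  omega

open scoped Classical in
noncomputable def G (n d : ℕ) (hd1 : 1 ≤ d) (hdn : d ≤ n) (l : List Bool) :
    (Fin n → Fin (2*n - d)) × (Fin (n - d) → Fin (2*n - d)) :=
  if h : (Finset.univ.filter (fun v : Fin (2*n - d) => l.getD (v:ℕ) false = true)).card = n
      ∧ ((Finset.univ.filter (fun v : Fin (2*n - d) => l.getD (v:ℕ) false = true))ᶜ).card = n - d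
  then
    (fun i => (Finset.univ.filter
        (fun v : Fin (2*n - d) => l.getD (v:ℕ) false = true)).orderEmbOfFin h.1 i,
     fun j => ((Finset.univ.filter
        (fun v : Fin (2*n - d) => l.getD (v:ℕ) false = true))ᶜ).orderEmbOfFin h.2 j)
  else (fun _ => ⟨0, by omega⟩, fun _ => ⟨0, by omega⟩)

lemma G_cond {n d : ℕ} (hdn : d ≤ n) {l : List Bool} (hl : l ∈ L2 n d) :
    (Finset.univ.filter (fun v : Fin (2*n - d) => l.getD (v:ℕ) false = true)).card = n
      ∧ ((Finset.univ.filter (fun v : Fin (2*n - d) => l.getD (v:ℕ) false = true))ᶜ).card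
        = n - d := by
  classical
  have hlen : l.length = 2*n - d := hl.1
  have hofn : List.ofFn (fun v : Fin (2*n - d) => l.getD (v:ℕ) false) = l := ofFn_getD hlen
  have hc := L2_counts hdn hl
  have hS : (Finset.univ.filter
      (fun v : Fin (2*n - d) => l.getD (v:ℕ) false = true)).card = n := by
    rw [card_filter_eq_count, hofn]
    exact hc.1
  refine ⟨hS, ?_⟩
  rw [Finset.card_compl, hS, Fintype.card_fin]
  omega

lemma G_apply {n d : ℕ} (hd1 : 1 ≤ d) (hdn : d ≤ n) {l : List Bool} (hl : l ∈ L2 n d) :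
    G n d hd1 hdn l
      = (fun i => (Finset.univ.filter
            (fun v : Fin (2*n - d) => l.getD (v:ℕ) false = true)).orderEmbOfFin (G_cond hdn hl).1 i,
         fun j => ((Finset.univ.filter
            (fun v : Fin (2*n - d) => l.getD (v:ℕ) false = true))ᶜ).orderEmbOfFin (G_cond hdn hl).2 j) := by
  classical
  rw [G]
  rw [dif_pos (G_cond hdn hl)]

theorem bijOn_G (n d : ℕ) (hd1 : 1 ≤ d) (hdn : d ≤ n) :
    Set.BijOn (G n d hd1 hdn) (L2 n d)
      {pr : (Fin n → Fin (2*n - d)) × (Fin (n - d) → Fin (2*n - d)) | IsSYT n d pr.1 pr.2} := by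
  classical
  refine ⟨?_, ?_, ?_⟩
  · -- MapsTo
    intro l hl
    have hlen : l.length = 2*n - d := hl.1
    have hofn : List.ofFn (fun v : Fin (2*n - d) => l.getD (v:ℕ) false) = l := ofFn_getD hlen
    have hcond := G_cond hdn hl
    have hb : ∀ t, 0 ≤ pre (List.ofFn (fun v : Fin (2*n - d) => l.getD (v:ℕ) false)) t := by
      intro t
      rw [hofn]
      exact hl.2.1 t
    rw [Set.mem_setOf_eq, G_apply hd1 hdn hl]
    refine ⟨(Finset.orderEmbOfFin _ _).strictMono, (Finset.orderEmbOfFin _ _).strictMono,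
      ?_, ?_, ?_⟩
    · intro j
      exact col_of_ballot _ hcond.1 hcond.2 hb j (Fin.castLE (Nat.sub_le n d) j) rfl
    · intro i j he
      have h1 := Finset.orderEmbOfFin_mem
        (Finset.univ.filter (fun v : Fin (2*n - d) => l.getD (v:ℕ) false = true)) hcond.1 i
      have h2 := Finset.orderEmbOfFin_mem
        (Finset.univ.filter (fun v : Fin (2*n - d) => l.getD (v:ℕ) false = true))ᶜ hcond.2 j
      rw [Finset.mem_compl] at h2
      simp only at he
      rw [he] at h1
      exact h2 h1
    · intro v
      by_cases hv : v ∈ Finset.univ.filter (fun v : Fin (2*n - d) => l.getD (v:ℕ) false = true)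
      · left
        have : v ∈ Set.range ⇑(Finset.orderEmbOfFin _ hcond.1) := by
          rw [Finset.range_orderEmbOfFin]
          exact hv
        obtain ⟨i, hi⟩ := this
        exact ⟨i, hi⟩
      · right
        have : v ∈ Set.range ⇑(Finset.orderEmbOfFin _ hcond.2) := by
          rw [Finset.range_orderEmbOfFin]
          simpa using hv
        obtain ⟨j, hj⟩ := this
        exact ⟨j, hj⟩
  · -- InjOn
    intro l1 h1 l2 h2 he
    have hr1 : Set.range (G n d hd1 hdn l1).1
        = ↑(Finset.univ.filter (fun v : Fin (2*n - d) => l1.getD (v:ℕ) false = true)) := by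
      rw [G_apply hd1 hdn h1]
      exact Finset.range_orderEmbOfFin _ _
    have hr2 : Set.range (G n d hd1 hdn l2).1
        = ↑(Finset.univ.filter (fun v : Fin (2*n - d) => l2.getD (v:ℕ) false = true)) := by
      rw [G_apply hd1 hdn h2]
      exact Finset.range_orderEmbOfFin _ _
    have hfeq : Finset.univ.filter (fun v : Fin (2*n - d) => l1.getD (v:ℕ) false = true)
        = Finset.univ.filter (fun v : Fin (2*n - d) => l2.getD (v:ℕ) false = true) := by
      apply Finset.coe_injective
      rw [← hr1, ← hr2, he]
    apply List.ext_getElem (by rw [h1.1, h2.1])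
    intro i hi1 hi2
    have hiN : i < 2*n - d := by rw [← h1.1]; exact hi1
    have hv : (l1.getD i false = true) ↔ (l2.getD i false = true) := by
      rw [Finset.ext_iff] at hfeq
      have := hfeq ⟨i, hiN⟩
      simpa using this
    rw [List.getD_eq_getElem l1 false hi1, List.getD_eq_getElem l2 false hi2] at hv
    cases hb1 : l1[i] <;> cases hb2 : l2[i]
    · rfl
    · rw [hb1, hb2] at hv; simp at hv
    · rw [hb1, hb2] at hv; simp at hv
    · rfl
  · -- SurjOn
    intro pr hpr
    obtain ⟨hmt, hmb, hcol, hdisj, hcover⟩ := hpr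
    set top := pr.1 with htopdef
    set bot := pr.2 with hbotdef
    set f : Fin (2*n - d) → Bool := fun v => decide (∃ i, top i = v) with hfdef
    set l := List.ofFn f with hldef
    have hSeq : Finset.univ.filter (fun v : Fin (2*n - d) => f v = true)
        = Finset.univ.image top := by
      ext v
      simp [hfdef, eq_comm]
    have hS : (Finset.univ.filter (fun v : Fin (2*n - d) => f v = true)).card = n := by
      rw [hSeq, Finset.card_image_of_injective _ hmt.injective]
      simp
    have hSc : ((Finset.univ.filter (fun v : Fin (2*n - d) => f v = true))ᶜ).card = n - d := by
      rw [Finset.card_compl, hS, Fintype.card_fin]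
      omega
    have htop_mem : ∀ i, top i ∈ Finset.univ.filter (fun v : Fin (2*n - d) => f v = true) := by
      intro i
      simp [hfdef]
    have hbot_mem : ∀ j, bot j ∈ (Finset.univ.filter (fun v : Fin (2*n - d) => f v = true))ᶜ := by
      intro j
      rw [Finset.mem_compl]
      simp [hfdef]
      intro i hi
      exact hdisj i j hi
    have htopeq : top = ⇑((Finset.univ.filter
        (fun v : Fin (2*n - d) => f v = true)).orderEmbOfFin hS) :=
      Finset.orderEmbOfFin_unique hS htop_mem hmt
    have hboteq : bot = ⇑(((Finset.univ.filter
        (fun v : Fin (2*n - d) => f v = true))ᶜ).orderEmbOfFin hSc) :=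
      Finset.orderEmbOfFin_unique hSc hbot_mem hmb
    have hb : ∀ t, 0 ≤ pre l t := by
      apply ballot_of_col (by omega) f hS hSc
      intro j j' hjj
      have hj'c : j' = Fin.castLE (Nat.sub_le n d) j := by
        apply Fin.ext
        simpa using hjj
      rw [← htopeq, ← hboteq, hj'c]
      exact hcol j
    have hlL2 : l ∈ L2 n d := by
      refine ⟨by simp [hldef], hb, ?_⟩
      have hct : l.count true = n := by
        rw [hldef, ← card_filter_eq_count]
        exact hS
      have hcf : l.count false = n - d := by
        rw [hldef, ← card_filter_eq_count, ← compl_filter_bool]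
        exact hSc
      have : bal l = (l.count true : ℤ) - l.count false := rfl
      rw [this, hct, hcf]
      push_cast
      omega
    refine ⟨l, hlL2, ?_⟩
    have hfilter_eq : Finset.univ.filter (fun v : Fin (2*n - d) => l.getD (v:ℕ) false = true)
        = Finset.univ.filter (fun v : Fin (2*n - d) => f v = true) := by
      apply Finset.filter_congr
      intro v _
      rw [hldef, getD_ofFn]
    have hcond := G_cond hdn hlL2
    rw [G_apply hd1 hdn hlL2]
    have htopeq2 : top = ⇑((Finset.univ.filter
        (fun v : Fin (2*n - d) => l.getD (v:ℕ) false = true)).orderEmbOfFin hcond.1) := by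
      apply Finset.orderEmbOfFin_unique
      · intro x
        rw [hfilter_eq]
        exact htop_mem x
      · exact hmt
    have hboteq2 : bot = ⇑(((Finset.univ.filter
        (fun v : Fin (2*n - d) => l.getD (v:ℕ) false = true))ᶜ).orderEmbOfFin hcond.2) := by
      apply Finset.orderEmbOfFin_unique
      · intro x
        rw [hfilter_eq]
        exact hbot_mem x
      · exact hmb
    apply Prod.ext
    · rw [← htopdef]
      rw [htopeq2]
    · rw [← hbotdef]
      rw [hboteq2]

lemma ncard_eq_of_bijOn {α β : Type*} {s : Set α} {t : Set β} {f : α → β}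
    (h : Set.BijOn f s t) : s.ncard = t.ncard := by
  rw [← h.image_eq, Set.ncard_image_of_injOn h.injOn]

end DS

/-- The Dyck paths of semilength `n` starting with at least `k` upsteps, ending
with at least `p` downsteps and touching the x-axis strictly between the
endpoints are equinumerous with the Standard Young Tableaux of shape
`(n, n-d)`, where `d = k + p`. -/
theorem dyck_equinumerous_SYT (n k p d : ℕ) (hk : 1 ≤ k) (hp : 1 ≤ p)
    (hd : d = k + p) (hdn : d ≤ n) :
    {f : Fin (2 * n) → Bool | IsDyckPath f ∧
        (∀ i : Fin (2 * n), (i : ℕ) < k → f i = true) ∧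
        (∀ i : Fin (2 * n), 2 * n - p ≤ (i : ℕ) → f i = false) ∧
        (∃ t, 0 < t ∧ t < 2 * n ∧ upCount f t = downCount f t)}.ncard
      = {pr : (Fin n → Fin (2 * n - d)) × (Fin (n - d) → Fin (2 * n - d)) |
          IsSYT n d pr.1 pr.2}.ncard := by
  subst hd
  have h1 := DS.bijOn_ofFn (n := n) (k := k) (p := p) (by omega) (by omega)
  have h2 := DS.bijOn_Phi (n := n) hk hp hdn
  have h3 := DS.bijOn_G n (k + p) (by omega) hdn
  rw [DS.ncard_eq_of_bijOn h1, DS.ncard_eq_of_bijOn h2, DS.ncard_eq_of_bijOn h3]
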